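/- arXiv:1608.02332 — 3 statements merged into one kernel-verified Lean document; each statement's English description precedes it below -/
import Mathlib

section
/- Let n ≥ 3, let G = C_n □ K_2 be the prism over C_n, and let (N,F) be a near-far-labeling of G. If S and T are two disjoint half-cuts of G (so S, T ⊆ F and S ∩ T = ∅), then S ∪ T is a useful cut. -/
/-- An `(r,t)`-threshold-coloring of the graph `G` with respect to the near-far-labeling
`(N, G.edgeSet \ N)`: a coloring with colors `{0, …, r-1}` such that the colors of the
endvertices of each near edge differ by at most `t`, and the colors of the endvertices of
each far edge differ by more than `t`. -/
def IsThresholdColoring {V : Type*} (G : SimpleGraph V) (N : Set (Sym2 V))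
    (r t : ℕ) (c : V → ℕ) : Prop :=
  (∀ v, c v < r) ∧
  (∀ ⦃u v⦄, G.Adj u v → s(u, v) ∈ N → |(c u : ℤ) - (c v : ℤ)| ≤ (t : ℤ)) ∧
  (∀ ⦃u v⦄, G.Adj u v → s(u, v) ∉ N → (t : ℤ) < |(c u : ℤ) - (c v : ℤ)|)

/-- The prism over the cycle `C_n`: the Cartesian (box) product of the cycle graph
of length `n` with the complete graph `K_2`. Vertices are `v_i = (i, 0)`, `u_i = (i, 1)`. -/
def prismGraph (n : ℕ) : SimpleGraph (Fin n × Fin 2) :=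
  (SimpleGraph.cycleGraph n).boxProd (⊤ : SimpleGraph (Fin 2))

/-- The ladder `L_m = P_m □ K_2`, where `P_m` is the path with `m` edges. -/
def ladderGraph (m : ℕ) : SimpleGraph (Fin (m + 1) × Fin 2) :=
  (SimpleGraph.pathGraph (m + 1)).boxProd (⊤ : SimpleGraph (Fin 2))

/-- The peripheral edge `e̲_i = v_i v_{i+1}` of the prism (indices mod `n`). -/
def underE (n : ℕ) [NeZero n] (i : Fin n) : Sym2 (Fin n × Fin 2) :=
  s((i, 0), (i + 1, 0))

/-- The peripheral edge `ē_i = u_i u_{i+1}` of the prism (indices mod `n`). -/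
def overE (n : ℕ) [NeZero n] (i : Fin n) : Sym2 (Fin n × Fin 2) :=
  s((i, 1), (i + 1, 1))

/-- The spoke `e'_i = u_i v_i` of the prism. -/
def spokeE (n : ℕ) (i : Fin n) : Sym2 (Fin n × Fin 2) :=
  s((i, 0), (i, 1))

open Fin.NatCast in
/-- The set of spokes `e'_{i+1}, e'_{i+2}, …, e'_{i+m}` (indices mod `n`). -/
def spokeRange (n : ℕ) [NeZero n] (i : Fin n) (m : ℕ) : Set (Sym2 (Fin n × Fin 2)) :=
  {e | ∃ j : ℕ, 1 ≤ j ∧ j ≤ m ∧ e = spokeE n (i + (j : Fin n))}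

open Fin.NatCast in
/-- A half-cut of the prism across the squares `σ_i, σ_{i+1}, …, σ_{i+m}` with respect to
the near-far-labeling `(N, E \ N)`: a set of far edges of the form
`{e̲_i, ē_{i+m}, e'_{i+1}, …, e'_{i+m}}` or `{ē_i, e̲_{i+m}, e'_{i+1}, …, e'_{i+m}}`. -/
def IsHalfCut (n : ℕ) [NeZero n] (N S : Set (Sym2 (Fin n × Fin 2))) : Prop :=
  S ⊆ (prismGraph n).edgeSet \ N ∧
  ∃ (i : Fin n) (m : ℕ), m < n ∧
    (S = insert (underE n i) (insert (overE n (i + (m : Fin n))) (spokeRange n i m)) ∨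
     S = insert (overE n i) (insert (underE n (i + (m : Fin n))) (spokeRange n i m)))

/-- A useful cut of the prism with respect to `(N, E \ N)`: a set `S` of far edges for
which there is a partition `{A, Aᶜ}` of the vertex set such that both induced subgraphs
are isomorphic to subgraphs of ladders and `S` is exactly the set of edges joining `A`
to `Aᶜ`. -/
def IsUsefulCut (n : ℕ) (N S : Set (Sym2 (Fin n × Fin 2))) : Prop :=
  S ⊆ (prismGraph n).edgeSet \ N ∧
  ∃ A : Set (Fin n × Fin 2),
    (∃ (m : ℕ) (f : (prismGraph n).induce A →g ladderGraph m), Function.Injective f) ∧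
    (∃ (m : ℕ) (f : (prismGraph n).induce Aᶜ →g ladderGraph m), Function.Injective f) ∧
    S = {e | ∃ a b, a ∈ A ∧ b ∉ A ∧ (prismGraph n).Adj a b ∧ e = s(a, b)}


open Fin.NatCast Fin.CommRing

set_option linter.unusedSectionVars false
set_option linter.unusedVariables false
set_option maxHeartbeats 1000000

section Helpers
variable {n : ℕ} [NeZero n]

lemma v_one (hn : 3 ≤ n) : (1 : Fin n).val = 1 := by
  rw [Fin.val_one']; exact Nat.mod_eq_of_lt (by omega)

lemma v1 (hn : 3 ≤ n) (a : Fin n) : (a + 1).val = if a.val + 1 = n then 0 else a.val + 1 := by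
  have ha := a.isLt
  rw [Fin.val_add, v_one hn]
  split_ifs with h
  · rw [h, Nat.mod_self]
  · exact Nat.mod_eq_of_lt (by omega)

lemma vsub (a b : Fin n) :
    (a - b).val = if b.val ≤ a.val then a.val - b.val else n + a.val - b.val := by
  have ha := a.isLt; have hb := b.isLt
  rw [Fin.sub_def]
  split_ifs with h
  · have h2 : n - b.val + a.val = n + (a.val - b.val) := by omega
    simp only [h2, Nat.add_mod_left]
    exact Nat.mod_eq_of_lt (by omega)
  · have h2 : n - b.val + a.val = n + a.val - b.val := by omega
    rw [h2]
    exact Nat.mod_eq_of_lt (by omega)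

lemma vcast (k : ℕ) (hk : k < n) : ((k : Fin n)).val = k := Fin.val_cast_of_lt hk

lemma vlast (hn : 3 ≤ n) (z : Fin n) : (z - (z + 1)).val = n - 1 := by
  have hz := z.isLt
  rw [vsub, v1 hn]
  split_ifs <;> omega

lemma wstep (hn : 3 ≤ n) (z j : Fin n) (hj : j ≠ z) :
    (j + 1 - (z + 1)).val = (j - (z + 1)).val + 1 := by
  have h : j + 1 - (z + 1) = (j - (z + 1)) + 1 := by ring
  rw [h, v1 hn]
  split_ifs with h2
  · exfalso
    apply hj
    have h3 : (j - (z + 1)).val = (z - (z + 1)).val := by rw [vlast hn]; omega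
    have h4 : j - (z + 1) = z - (z + 1) := Fin.val_inj.mp h3
    exact sub_left_inj.mp h4
  · rfl

/-- membership in the spoke interval `(i, i+m]` -/
def spx (n : ℕ) [NeZero n] (i : Fin n) (m : ℕ) (k : Fin n) : Prop :=
  1 ≤ (k - i).val ∧ (k - i).val ≤ m

/-- the arc `{p+1, …, p'}` -/
def arcB (n : ℕ) [NeZero n] (p p' : Fin n) (j : Fin n) : Prop :=
  (j - (p + 1)).val ≤ (p' - (p + 1)).val

instance (i : Fin n) (m : ℕ) (k : Fin n) : Decidable (spx n i m k) := by
  unfold spx; infer_instance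

instance (p p' j : Fin n) : Decidable (arcB n p p' j) := by
  unfold arcB; infer_instance

lemma sub_val_eq (hn : 3 ≤ n) {a b c : Fin n} (h : (a - c).val = (b - c).val) : a = b :=
  sub_left_inj.mp (Fin.val_inj.mp h)

lemma b1 (hn : 3 ≤ n) (p p' : Fin n) : arcB n p p' (p + 1) := by
  simp [arcB, sub_self]

lemma b2 (hn : 3 ≤ n) {p p' : Fin n} (hpp : p ≠ p') : ¬ arcB n p p' p := by
  intro hB
  unfold arcB at hB
  rw [vlast hn] at hB
  have h2 := (p' - (p + 1)).isLt
  have h3 : (p' - (p + 1)).val = (p - (p + 1)).val := by rw [vlast hn]; omega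
  exact hpp (sub_val_eq hn h3).symm

lemma b3 (hn : 3 ≤ n) (p p' : Fin n) : arcB n p p' p' := le_refl _

lemma b4 (hn : 3 ≤ n) {p p' : Fin n} (hpp : p ≠ p') : ¬ arcB n p p' (p' + 1) := by
  unfold arcB
  rw [wstep hn p p' (Ne.symm hpp)]
  omega

lemma bchange (hn : 3 ≤ n) {p p' : Fin n} (hpp : p ≠ p') (j : Fin n) :
    ¬(arcB n p p' j ↔ arcB n p p' (j + 1)) ↔ (j = p ∨ j = p') := by
  by_cases h1 : j = p
  · subst h1
    have hA := b1 hn j p'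
    have hB := b2 hn hpp
    simp only [eq_self_iff_true, true_or, iff_true]
    tauto
  by_cases h2 : j = p'
  · subst h2
    have hA := b3 hn p j
    have hB := b4 hn hpp
    simp only [eq_self_iff_true, or_true, iff_true]
    tauto
  · have hs := wstep hn p j h1
    have hne : (j - (p + 1)).val ≠ (p' - (p + 1)).val := fun h => h2 (sub_val_eq hn h)
    simp only [h1, h2, or_self, iff_false, not_not]
    unfold arcB
    rw [hs]
    omega

lemma arc_compl (hn : 3 ≤ n) {p p' : Fin n} (hpp : p ≠ p') (j : Fin n) :
    arcB n p' p j ↔ ¬ arcB n p p' j := by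
  have hj := j.isLt; have hp := p.isLt; have hp' := p'.isLt
  have hne : p.val ≠ p'.val := fun h => hpp (Fin.val_inj.mp h)
  unfold arcB
  rw [vsub, vsub, vsub, vsub, v1 hn, v1 hn]
  split_ifs <;> omega

lemma e0_iff (i j : Fin n) : j = i ↔ (j - i).val = 0 := by
  constructor
  · intro h; subst h; simp
  · intro h
    have : (j - i) = 0 := Fin.val_inj.mp (by simpa using h)
    exact sub_eq_zero.mp this

lemma em_iff (hn : 3 ≤ n) (i j : Fin n) (m : ℕ) (hm : m < n) :
    j = i + (m : Fin n) ↔ (j - i).val = m := by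
  have hv : ((m : Fin n)).val = m := vcast m hm
  rw [← sub_eq_iff_eq_add', ← Fin.val_inj, hv]

lemma sp_left (hn : 3 ≤ n) {i j : Fin n} {m : ℕ} (hm : m < n)
    (h1 : spx n i m (j + 1)) (h2 : ¬ spx n i m j) : j = i := by
  have hb := (j - i).isLt
  have hji : j + 1 - i = (j - i) + 1 := by ring
  unfold spx at h1 h2
  rw [hji, v1 hn] at h1
  rw [e0_iff]
  split_ifs at h1 <;> omega

lemma sp_right (hn : 3 ≤ n) {i j : Fin n} {m : ℕ} (hm : m < n)
    (h1 : spx n i m j) (h2 : ¬ spx n i m (j + 1)) : j = i + (m : Fin n) := by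
  have hb := (j - i).isLt
  have hji : j + 1 - i = (j - i) + 1 := by ring
  unfold spx at h1 h2
  rw [hji, v1 hn] at h2
  rw [em_iff hn i j m hm]
  split_ifs at h2 <;> omega

lemma keylem (hn : 3 ≤ n) {i p q : Fin n} {m : ℕ} (hm : m < n)
    (ht : (p = i ∧ q = i + (m : Fin n)) ∨ (p = i + (m : Fin n) ∧ q = i)) (j : Fin n) :
    (¬((j = p) ↔ ¬(spx n i m j ↔ spx n i m (j + 1)))) ↔ j = q := by
  have hb := (j - i).isLt
  have hji : j + 1 - i = (j - i) + 1 := by ring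
  have he0 := e0_iff i j
  have hem := em_iff hn i j m hm
  unfold spx
  rw [hji, v1 hn]
  rcases ht with ⟨hp, hq⟩ | ⟨hp, hq⟩ <;> subst hp <;> subst hq <;>
    rw [he0, hem] <;> try rw [he0]
  · split_ifs <;> omega
  · split_ifs <;> omega

lemma spokeRange_mem (hn : 3 ≤ n) (i : Fin n) (m : ℕ) (hm : m < n)
    (e : Sym2 (Fin n × Fin 2)) :
    e ∈ spokeRange n i m ↔ ∃ k : Fin n, spx n i m k ∧ e = spokeE n k := by
  constructor
  · rintro ⟨j, h1, h2, rfl⟩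
    refine ⟨i + (j : Fin n), ⟨?_, ?_⟩, rfl⟩ <;>
      rw [add_sub_cancel_left, vcast j (by omega)] <;> omega
  · rintro ⟨k, ⟨h1, h2⟩, rfl⟩
    refine ⟨(k - i).val, h1, h2, ?_⟩
    congr 1
    rw [Fin.cast_val_eq_self, add_sub_cancel]

lemma cyc_iff (hn : 3 ≤ n) (u v : Fin n) :
    (SimpleGraph.cycleGraph n).Adj u v ↔ (u = v + 1 ∨ v = u + 1) := by
  rw [SimpleGraph.cycleGraph_adj']
  have h1 : ((u - v).val = 1) ↔ u = v + 1 := by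
    rw [← v_one hn, Fin.val_inj, sub_eq_iff_eq_add']
  have h2 : ((v - u).val = 1) ↔ v = u + 1 := by
    rw [← v_one hn, Fin.val_inj, sub_eq_iff_eq_add']
  rw [h1, h2]

lemma prism_adj (hn : 3 ≤ n) (j j' : Fin n) (l l' : Fin 2) :
    (prismGraph n).Adj (j, l) (j', l') ↔
      ((j = j' + 1 ∨ j' = j + 1) ∧ l = l') ∨ (j = j' ∧ l ≠ l') := by
  show ((SimpleGraph.cycleGraph n).boxProd _).Adj _ _ ↔ _
  rw [SimpleGraph.boxProd_adj]
  simp only [SimpleGraph.top_adj]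
  rw [cyc_iff hn]
  tauto

/-- One side of the partition determined by two disjoint half-cuts. -/
def sideA (n : ℕ) [NeZero n] (p p' : Fin n) (Sp : Fin n → Prop) : Set (Fin n × Fin 2) :=
  {x | (x.2 = 0 ∧ arcB n p p' x.1) ∨ (x.2 = 1 ∧ ¬(arcB n p p' x.1 ↔ Sp x.1))}

lemma memA0 {p p' : Fin n} {Sp : Fin n → Prop} (j : Fin n) :
    ((j, (0 : Fin 2)) ∈ sideA n p p' Sp) ↔ arcB n p p' j := by
  simp [sideA]

lemma memA1 {p p' : Fin n} {Sp : Fin n → Prop} (j : Fin n) :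
    ((j, (1 : Fin 2)) ∈ sideA n p p' Sp) ↔ ¬(arcB n p p' j ↔ Sp j) := by
  simp [sideA]

lemma sideA_compl (hn : 3 ≤ n) {p p' : Fin n} (hpp : p ≠ p') (S1 S2 : Fin n → Prop) :
    (sideA n p p' (fun k => S1 k ∨ S2 k))ᶜ = sideA n p' p (fun k => S2 k ∨ S1 k) := by
  ext ⟨j, l⟩
  have hc := arc_compl hn hpp j
  have hc' := arc_compl hn (Ne.symm hpp) j
  simp only [Set.mem_compl_iff, sideA, Set.mem_setOf_eq]
  have hl : l = 0 ∨ l = 1 := by omega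
  rcases hl with rfl | rfl
  · simp only [eq_self_iff_true, true_and, show (0 : Fin 2) ≠ 1 by decide, false_and, or_false]
    tauto
  · simp only [show (1 : Fin 2) ≠ 0 by decide, false_and, eq_self_iff_true, true_and, false_or]
    tauto

end Helpers

lemma bool_magic (a1 a2 s1 s2 t1 t2 p1 p2 q1 q2 : Bool)
    (H1 : (!(a1 == a2)) = (p1 || p2))
    (H2 : (!(p1 == !(s1 == s2))) = q1)
    (H3 : (!(p2 == !(t1 == t2))) = q2)
    (hd1 : (s1 && t1) = false) (hd2 : (s2 && t2) = false)
    (hp : (p1 && p2) = false) (hq : (q1 && q2) = false) :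
    (!((!(a1 == (s1 || t1))) == (!(a2 == (s2 || t2))))) = (q1 || q2) := by
  revert H1 H2 H3 hd1 hd2 hp hq
  revert a1 a2 s1 s2 t1 t2 p1 p2 q1 q2
  decide

lemma prop_magic (A1 A2 S1 S2 T1 T2 P1 P2 Q1 Q2 : Prop)
    [Decidable A1] [Decidable A2] [Decidable S1] [Decidable S2] [Decidable T1] [Decidable T2]
    [Decidable P1] [Decidable P2] [Decidable Q1] [Decidable Q2]
    (H1 : ¬(A1 ↔ A2) ↔ (P1 ∨ P2))
    (H2 : ¬(P1 ↔ ¬(S1 ↔ S2)) ↔ Q1)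
    (H3 : ¬(P2 ↔ ¬(T1 ↔ T2)) ↔ Q2)
    (hd1 : ¬(S1 ∧ T1)) (hd2 : ¬(S2 ∧ T2)) (hp : ¬(P1 ∧ P2)) (hq : ¬(Q1 ∧ Q2)) :
    ¬((¬(A1 ↔ (S1 ∨ T1))) ↔ (¬(A2 ↔ (S2 ∨ T2)))) ↔ (Q1 ∨ Q2) := by
  have H1' : (!(decide A1 == decide A2)) = (decide P1 || decide P2) := by
    rw [Bool.decide_beq_decide, ← Bool.decide_or, ← decide_not, decide_eq_decide]; exact H1
  have H2' : (!(decide P1 == !(decide S1 == decide S2))) = decide Q1 := by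
    rw [Bool.decide_beq_decide, ← decide_not, Bool.decide_beq_decide, ← decide_not,
      decide_eq_decide]; exact H2
  have H3' : (!(decide P2 == !(decide T1 == decide T2))) = decide Q2 := by
    rw [Bool.decide_beq_decide, ← decide_not, Bool.decide_beq_decide, ← decide_not,
      decide_eq_decide]; exact H3
  have hd1' : (decide S1 && decide T1) = false := by
    rw [← Bool.decide_and]; exact decide_eq_false hd1
  have hd2' : (decide S2 && decide T2) = false := by
    rw [← Bool.decide_and]; exact decide_eq_false hd2
  have hp' : (decide P1 && decide P2) = false := by
    rw [← Bool.decide_and]; exact decide_eq_false hp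
  have hq' : (decide Q1 && decide Q2) = false := by
    rw [← Bool.decide_and]; exact decide_eq_false hq
  have key := bool_magic _ _ _ _ _ _ _ _ _ _ H1' H2' H3' hd1' hd2' hp' hq'
  simp only [Bool.decide_beq_decide, ← decide_not, ← Bool.decide_or] at key
  exact decide_eq_decide.mp key

section Main
variable {n : ℕ} [NeZero n]

lemma uchange (hn : 3 ≤ n) {iS iT pS qS pT qT : Fin n} {mS mT : ℕ}
    (hmS : mS < n) (hmT : mT < n)
    (htS : (pS = iS ∧ qS = iS + (mS : Fin n)) ∨ (pS = iS + (mS : Fin n) ∧ qS = iS))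
    (htT : (pT = iT ∧ qT = iT + (mT : Fin n)) ∨ (pT = iT + (mT : Fin n) ∧ qT = iT))
    (hpp : pS ≠ pT) (hqq : qS ≠ qT)
    (hdisj : ∀ k, ¬(spx n iS mS k ∧ spx n iT mT k)) (j : Fin n) :
    ¬((¬(arcB n pS pT j ↔ (spx n iS mS j ∨ spx n iT mT j))) ↔
      (¬(arcB n pS pT (j + 1) ↔ (spx n iS mS (j + 1) ∨ spx n iT mT (j + 1))))) ↔
      (j = qS ∨ j = qT) :=
  prop_magic _ _ _ _ _ _ _ _ _ _ (bchange hn hpp j) (keylem hn hmS htS j) (keylem hn hmT htT j)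
    (hdisj j) (hdisj (j + 1)) (fun h => hpp (h.1.symm.trans h.2))
    (fun h => hqq (h.1.symm.trans h.2))

lemma embed_side (hn : 3 ≤ n) (iS iT pS qS pT qT : Fin n) (mS mT : ℕ)
    (hmS : mS < n) (hmT : mT < n)
    (htS : (pS = iS ∧ qS = iS + (mS : Fin n)) ∨ (pS = iS + (mS : Fin n) ∧ qS = iS))
    (htT : (pT = iT ∧ qT = iT + (mT : Fin n)) ∨ (pT = iT + (mT : Fin n) ∧ qT = iT))
    (hpp : pS ≠ pT) (hqq : qS ≠ qT)
    (hdisj : ∀ k, ¬(spx n iS mS k ∧ spx n iT mT k)) :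
    ∃ f : (prismGraph n).induce
        (sideA n pS pT (fun k => spx n iS mS k ∨ spx n iT mT k)) →g ladderGraph n,
      Function.Injective f := by
  set Sp : Fin n → Prop := fun k => spx n iS mS k ∨ spx n iT mT k with hSp
  set B : Fin n → Prop := fun j => arcB n pS pT j with hBdef
  set U : Fin n → Prop := fun j => ¬(B j ↔ Sp j) with hUdef
  have hB1 : B (pS + 1) := b1 hn pS pT
  have hB2 : ¬ B pS := b2 hn hpp
  have hB3 : B pT := b3 hn pS pT
  have hB4 : ¬ B (pT + 1) := b4 hn hpp
  have cU : ∀ j, ¬(U j ↔ U (j + 1)) ↔ (j = qS ∨ j = qT) := fun j =>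
    uchange hn hmS hmT htS htT hpp hqq hdisj j
  have goodz : ∃ z, ¬(B z ∧ B (z + 1)) ∧ ¬(U z ∧ U (z + 1)) := by
    by_contra hcon
    have hcon' : ∀ z, (B z ∧ B (z + 1)) ∨ (U z ∧ U (z + 1)) := by
      intro z
      by_cases h1 : B z ∧ B (z + 1)
      · exact Or.inl h1
      · by_cases h2 : U z ∧ U (z + 1)
        · exact Or.inr h2
        · exact absurd ⟨z, h1, h2⟩ hcon
    have hUS : U pS ∧ U (pS + 1) := by
      rcases hcon' pS with h | h
      · exact absurd h.1 hB2
      · exact h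
    have hUT : U pT ∧ U (pT + 1) := by
      rcases hcon' pT with h | h
      · exact absurd h.2 hB4
      · exact h
    have hBqS : B qS ∧ B (qS + 1) := by
      rcases hcon' qS with h | h
      · exact h
      · exact absurd (iff_of_true h.1 h.2) ((cU qS).mpr (Or.inl rfl))
    have hBqT : B qT ∧ B (qT + 1) := by
      rcases hcon' qT with h | h
      · exact h
      · exact absurd (iff_of_true h.1 h.2) ((cU qT).mpr (Or.inr rfl))
    have hSp1 : Sp pS := by
      have h : ¬(B pS ↔ Sp pS) := hUS.1
      by_cases hs : Sp pS
      · exact hs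
      · exact absurd (iff_of_false hB2 hs) h
    have hSp2 : ¬ Sp (pS + 1) := by
      have h : ¬(B (pS + 1) ↔ Sp (pS + 1)) := hUS.2
      intro hs
      exact h (iff_of_true hB1 hs)
    have hSp3 : ¬ Sp pT := by
      have h : ¬(B pT ↔ Sp pT) := hUT.1
      intro hs
      exact h (iff_of_true hB3 hs)
    have hSp4 : Sp (pT + 1) := by
      have h : ¬(B (pT + 1) ↔ Sp (pT + 1)) := hUT.2
      by_cases hs : Sp (pT + 1)
      · exact hs
      · exact absurd (iff_of_false hB4 hs) h
    have hTtype : pT = iT ∧ qT = iT + (mT : Fin n) ∧ 1 ≤ mT := by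
      rcases hSp4 with hS4 | hT4
      · have hpt : pT = iS := sp_left hn hmS hS4 (fun h => hSp3 (Or.inl h))
        rcases htS with ⟨h1, h2⟩ | ⟨h1, h2⟩
        · exact absurd (h1.trans hpt.symm) hpp
        · rw [h2, ← hpt] at hBqS
          exact absurd hBqS.2 hB4
      · have hpt : pT = iT := sp_left hn hmT hT4 (fun h => hSp3 (Or.inr h))
        rcases htT with ⟨h1, h2⟩ | ⟨h1, h2⟩
        · exact ⟨h1, h2, le_trans hT4.1 hT4.2⟩
        · exfalso
          rw [h1] at hpt
          have hm0 : (mT : Fin n) = 0 := by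
            have := hpt.symm
            rwa [left_eq_add] at this
          have : mT = 0 := by
            have hv := vcast mT hmT (n := n)
            rw [hm0] at hv
            simpa using hv.symm
          rw [this] at hT4
          exact absurd (le_trans hT4.1 hT4.2) (by omega)
    obtain ⟨hiT, hqT2, hmT1⟩ := hTtype
    have hSpS_S : spx n iS mS pS := by
      rcases hSp1 with h | h
      · exact h
      · exfalso
        have hps : pS = iT + (mT : Fin n) :=
          sp_right hn hmT h (fun h2 => hSp2 (Or.inr h2))
        have : pS = qT := by rw [hps, hqT2]
        rw [← this] at hBqT
        exact hB2 hBqT.1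
    have hnotT_pS : ¬ spx n iT mT pS := fun h => hdisj pS ⟨hSpS_S, h⟩
    have walk : ∀ k, k ≤ mT → ((pT + (k : Fin n)) - (pS + 1)).val
        = (pT - (pS + 1)).val + k := by
      intro k
      induction k with
      | zero => intro _; simp
      | succ k ih =>
        intro hk
        have hk' : k ≤ mT := by omega
        have hih := ih hk'
        have hcast : ((k + 1 : ℕ) : Fin n) = (k : Fin n) + 1 := by push_cast; ring
        rw [hcast, ← add_assoc]
        have hne : pT + (k : Fin n) ≠ pS := by
          intro h
          rcases Nat.eq_zero_or_pos k with h0 | h1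
          · rw [h0] at h
            simp at h
            exact hpp h.symm
          · apply hnotT_pS
            rw [← h]
            have hsub : pT + (k : Fin n) - iT = (k : Fin n) := by
              rw [← hiT]; ring
            unfold spx
            rw [hsub, vcast k (by omega)]
            exact ⟨h1, by omega⟩
        rw [wstep hn pS (pT + (k : Fin n)) hne, hih]
        omega
    have hfin := walk mT (le_refl _)
    have hq2 : qT = pT + (mT : Fin n) := by rw [hqT2, ← hiT]
    have hBq := hBqT.1
    rw [hBdef] at hBq
    unfold arcB at hBq
    rw [hq2, hfin] at hBq
    omega
  obtain ⟨z, hgB, hgU⟩ := goodz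
  refine ⟨⟨fun x => (⟨(x.1.1 - (z + 1)).val, Nat.lt_succ_of_lt (Fin.isLt _)⟩, x.1.2), ?_⟩, ?_⟩
  · rintro ⟨⟨j, l⟩, ha⟩ ⟨⟨j', l'⟩, hb⟩ hab
    have hab' : (prismGraph n).Adj (j, l) (j', l') := hab
    rw [prism_adj hn] at hab'
    simp only
    rcases hab' with ⟨hor, hl⟩ | ⟨hj, hl⟩
    · subst hl
      have hll : l = 0 ∨ l = 1 := by omega
      have hstep : ∀ a : Fin n, a ≠ z → ((a + 1 - (z + 1)).val = (a - (z + 1)).val + 1) :=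
        fun a haz => wstep hn z a haz
      have hBB : ∀ a : Fin n, B a → B (a + 1) → a ≠ z := by
        intro a h1 h2 haz
        exact hgB ⟨haz ▸ h1, haz ▸ h2⟩
      have hUU : ∀ a : Fin n, U a → U (a + 1) → a ≠ z := by
        intro a h1 h2 haz
        exact hgU ⟨haz ▸ h1, haz ▸ h2⟩
      have hmain : ∀ a : Fin n, a ≠ z →
          (ladderGraph n).Adj (⟨(a - (z + 1)).val, Nat.lt_succ_of_lt (Fin.isLt _)⟩, l)
            (⟨(a + 1 - (z + 1)).val, Nat.lt_succ_of_lt (Fin.isLt _)⟩, l) := by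
        intro a haz
        apply Or.inl
        refine ⟨?_, rfl⟩
        rw [SimpleGraph.pathGraph_adj]
        left
        simp only
        rw [hstep a haz]
      rcases hor with h1 | h1
      · -- j = j' + 1
        subst h1
        have hne : j' ≠ z := by
          rcases hll with rfl | rfl
          · exact hBB j' ((memA0 j').mp hb) ((memA0 _).mp ha)
          · exact hUU j' ((memA1 j').mp hb) ((memA1 _).mp ha)
        exact ((ladderGraph n).symm.symm _ _ (hmain j' hne))
      · -- j' = j + 1
        subst h1
        have hne : j ≠ z := by
          rcases hll with rfl | rfl
          · exact hBB j ((memA0 j).mp ha) ((memA0 _).mp hb)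
          · exact hUU j ((memA1 j).mp ha) ((memA1 _).mp hb)
        exact hmain j hne
    · subst hj
      apply Or.inr
      exact ⟨hl, rfl⟩
  · rintro ⟨⟨j, l⟩, ha⟩ ⟨⟨j', l'⟩, hb⟩ hab
    have h1 : (j - (z + 1)).val = (j' - (z + 1)).val :=
      congrArg (fun t : Fin (n + 1) × Fin 2 => t.1.val) hab
    have h2 : l = l' := congrArg Prod.snd hab
    have hj : j = j' := sub_val_eq hn h1
    subst hj; subst h2
    rfl
end Main



section Final
variable {n : ℕ} [NeZero n]

lemma halfcut_repr (hn : 3 ≤ n) {N S : Set (Sym2 (Fin n × Fin 2))} (hS : IsHalfCut n N S) :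
    ∃ (i p q : Fin n) (m : ℕ), m < n ∧
      ((p = i ∧ q = i + (m : Fin n)) ∨ (p = i + (m : Fin n) ∧ q = i)) ∧
      ∀ e, e ∈ S ↔ (e = underE n p ∨ e = overE n q ∨ ∃ k, spx n i m k ∧ e = spokeE n k) := by
  obtain ⟨hsub, i, m, hm, hor | hor⟩ := hS
  · refine ⟨i, i, i + m, m, hm, Or.inl ⟨rfl, rfl⟩, ?_⟩
    intro e
    rw [hor]
    simp only [Set.mem_insert_iff]
    rw [spokeRange_mem hn i m hm]
  · refine ⟨i, i + m, i, m, hm, Or.inr ⟨rfl, rfl⟩, ?_⟩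
    intro e
    rw [hor]
    simp only [Set.mem_insert_iff]
    rw [spokeRange_mem hn i m hm]
    tauto


/-- In a prism with a near-far-labeling, the union of two disjoint half-cuts is a
useful cut. -/
theorem union_disjoint_halfCuts_isUsefulCut (n : ℕ) [NeZero n] (hn : 3 ≤ n)
    (N : Set (Sym2 (Fin n × Fin 2))) (hN : N ⊆ (prismGraph n).edgeSet)
    (S T : Set (Sym2 (Fin n × Fin 2)))
    (hS : IsHalfCut n N S) (hT : IsHalfCut n N T) (hST : Disjoint S T) :
    IsUsefulCut n N (S ∪ T) := by
  obtain ⟨iS, pS, qS, mS, hmS, htS, memS⟩ := halfcut_repr hn hS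
  obtain ⟨iT, pT, qT, mT, hmT, htT, memT⟩ := halfcut_repr hn hT
  have hUnd_S : underE n pS ∈ S := (memS _).mpr (Or.inl rfl)
  have hUnd_T : underE n pT ∈ T := (memT _).mpr (Or.inl rfl)
  have hOv_S : overE n qS ∈ S := (memS _).mpr (Or.inr (Or.inl rfl))
  have hOv_T : overE n qT ∈ T := (memT _).mpr (Or.inr (Or.inl rfl))
  have hpp : pS ≠ pT := by
    intro h
    exact Set.disjoint_left.mp hST hUnd_S (by rw [h]; exact hUnd_T)
  have hqq : qS ≠ qT := by
    intro h
    exact Set.disjoint_left.mp hST hOv_S (by rw [h]; exact hOv_T)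
  have hdisj : ∀ k, ¬(spx n iS mS k ∧ spx n iT mT k) := by
    rintro k ⟨h1, h2⟩
    have e1 : spokeE n k ∈ S := (memS _).mpr (Or.inr (Or.inr ⟨k, h1, rfl⟩))
    have e2 : spokeE n k ∈ T := (memT _).mpr (Or.inr (Or.inr ⟨k, h2, rfl⟩))
    exact Set.disjoint_left.mp hST e1 e2
  set Sp : Fin n → Prop := fun k => spx n iS mS k ∨ spx n iT mT k with hSpdef
  set A : Set (Fin n × Fin 2) := sideA n pS pT Sp with hAdef
  set B : Fin n → Prop := fun j => arcB n pS pT j with hBdef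
  set U : Fin n → Prop := fun j => ¬(B j ↔ Sp j) with hUdef
  have hB1 : B (pS + 1) := b1 hn pS pT
  have hB2 : ¬ B pS := b2 hn hpp
  have hB3 : B pT := b3 hn pS pT
  have hB4 : ¬ B (pT + 1) := b4 hn hpp
  have cU : ∀ j, ¬(U j ↔ U (j + 1)) ↔ (j = qS ∨ j = qT) := fun j =>
    uchange hn hmS hmT htS htT hpp hqq hdisj j
  have memA0' : ∀ j : Fin n, ((j, (0 : Fin 2)) ∈ A) ↔ B j := fun j => memA0 j
  have memA1' : ∀ j : Fin n, ((j, (1 : Fin 2)) ∈ A) ↔ U j := fun j => memA1 j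
  refine ⟨Set.union_subset hS.1 hT.1, A, ?_, ?_, ?_⟩
  · exact ⟨n, embed_side hn iS iT pS qS pT qT mS mT hmS hmT htS htT hpp hqq hdisj⟩
  · refine ⟨n, ?_⟩
    have hc := sideA_compl hn hpp (spx n iS mS) (spx n iT mT)
    rw [hAdef, hSpdef, hc]
    obtain ⟨f, hf⟩ := embed_side hn iT iS pT qT pS qS mT mS hmT hmS htT htS (Ne.symm hpp)
      (Ne.symm hqq) (fun k h => hdisj k ⟨h.2, h.1⟩)
    exact ⟨f, hf⟩
  · ext e
    simp only [Set.mem_union, Set.mem_setOf_eq]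
    constructor
    · -- each cut edge is a boundary edge
      have hunder : ∀ p' : Fin n, B p' → ¬ B (p' + 1) →
          ∃ a b, a ∈ A ∧ b ∉ A ∧ (prismGraph n).Adj a b ∧ underE n p' = s(a, b) := by
        intro p' h1 h2
        exact ⟨(p', 0), (p' + 1, 0), (memA0' _).mpr h1, fun hc => h2 ((memA0' _).mp hc),
          (prism_adj hn _ _ _ _).mpr (Or.inl ⟨Or.inr rfl, rfl⟩), rfl⟩
      have hunder' : ∀ p' : Fin n, ¬ B p' → B (p' + 1) →
          ∃ a b, a ∈ A ∧ b ∉ A ∧ (prismGraph n).Adj a b ∧ underE n p' = s(a, b) := by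
        intro p' h1 h2
        refine ⟨(p' + 1, 0), (p', 0), (memA0' _).mpr h2, fun hc => h1 ((memA0' _).mp hc),
          (prism_adj hn _ _ _ _).mpr (Or.inl ⟨Or.inl rfl, rfl⟩), ?_⟩
        unfold underE
        exact Sym2.eq_swap
      have hover : ∀ q' : Fin n, ¬(U q' ↔ U (q' + 1)) →
          ∃ a b, a ∈ A ∧ b ∉ A ∧ (prismGraph n).Adj a b ∧ overE n q' = s(a, b) := by
        intro q' hch
        by_cases hu : U q'
        · have hu2 : ¬ U (q' + 1) := fun h2 => hch (iff_of_true hu h2)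
          exact ⟨(q', 1), (q' + 1, 1), (memA1' _).mpr hu, fun hc => hu2 ((memA1' _).mp hc),
            (prism_adj hn _ _ _ _).mpr (Or.inl ⟨Or.inr rfl, rfl⟩), rfl⟩
        · have hu2 : U (q' + 1) := fun h2 => hch (iff_of_false hu (fun hu2 => hu2 h2))
          refine ⟨(q' + 1, 1), (q', 1), (memA1' _).mpr hu2, fun hc => hu ((memA1' _).mp hc),
            (prism_adj hn _ _ _ _).mpr (Or.inl ⟨Or.inl rfl, rfl⟩), ?_⟩
          unfold overE
          exact Sym2.eq_swap
      have hspoke : ∀ k : Fin n, Sp k →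
          ∃ a b, a ∈ A ∧ b ∉ A ∧ (prismGraph n).Adj a b ∧ spokeE n k = s(a, b) := by
        intro k hk
        by_cases hb : B k
        · have hu : ¬ U k := fun hu => hu (iff_of_true hb hk)
          exact ⟨(k, 0), (k, 1), (memA0' _).mpr hb, fun hc => hu ((memA1' _).mp hc),
            (prism_adj hn _ _ _ _).mpr (Or.inr ⟨rfl, by decide⟩), rfl⟩
        · have hu : U k := fun hiff => hb (hiff.mpr hk)
          refine ⟨(k, 1), (k, 0), (memA1' _).mpr hu, fun hc => hb ((memA0' _).mp hc),
            (prism_adj hn _ _ _ _).mpr (Or.inr ⟨rfl, by decide⟩), ?_⟩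
          unfold spokeE
          exact Sym2.eq_swap
      rintro (he | he)
      · rcases (memS e).mp he with h | h | ⟨k, hk, h⟩
        · rw [h]; exact hunder' pS hB2 hB1
        · rw [h]; exact hover qS ((cU qS).mpr (Or.inl rfl))
        · rw [h]; exact hspoke k (Or.inl hk)
      · rcases (memT e).mp he with h | h | ⟨k, hk, h⟩
        · rw [h]; exact hunder pT hB3 hB4
        · rw [h]; exact hover qT ((cU qT).mpr (Or.inr rfl))
        · rw [h]; exact hspoke k (Or.inr hk)
    · rintro ⟨⟨j, l⟩, ⟨j', l'⟩, ha, hb, hadj, rfl⟩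
      rw [prism_adj hn] at hadj
      rcases hadj with ⟨hor, hl⟩ | ⟨hj, hl⟩
      · subst hl
        have hll : l = 0 ∨ l = 1 := by omega
        rcases hll with rfl | rfl
        · have haB : B j := (memA0' j).mp ha
          have hbB : ¬ B j' := fun h => hb ((memA0' j').mpr h)
          rcases hor with h1 | h1
          · subst h1
            have hch : ¬(B j' ↔ B (j' + 1)) := fun hiff => hbB (hiff.mpr haB)
            rcases (bchange hn hpp j').mp hch with h | h
            · subst h
              left
              apply (memS _).mpr
              left
              unfold underE
              exact Sym2.eq_swap
            · subst h
              right
              apply (memT _).mpr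
              left
              unfold underE
              exact Sym2.eq_swap
          · subst h1
            have hch : ¬(B j ↔ B (j + 1)) := fun hiff => hbB (hiff.mp haB)
            rcases (bchange hn hpp j).mp hch with h | h
            · subst h
              exact Or.inl ((memS _).mpr (Or.inl rfl))
            · subst h
              exact Or.inr ((memT _).mpr (Or.inl rfl))
        · have haU : U j := (memA1' j).mp ha
          have hbU : ¬ U j' := fun h => hb ((memA1' j').mpr h)
          rcases hor with h1 | h1
          · subst h1
            have hch : ¬(U j' ↔ U (j' + 1)) := fun hiff => hbU (hiff.mpr haU)
            rcases (cU j').mp hch with h | h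
            · subst h
              left
              apply (memS _).mpr
              right; left
              unfold overE
              exact Sym2.eq_swap
            · subst h
              right
              apply (memT _).mpr
              right; left
              unfold overE
              exact Sym2.eq_swap
          · subst h1
            have hch : ¬(U j ↔ U (j + 1)) := fun hiff => hbU (hiff.mp haU)
            rcases (cU j).mp hch with h | h
            · subst h
              exact Or.inl ((memS _).mpr (Or.inr (Or.inl rfl)))
            · subst h
              exact Or.inr ((memT _).mpr (Or.inr (Or.inl rfl)))
      · subst hj
        have hll : l = 0 ∨ l = 1 := by omega
        have hll' : l' = 0 ∨ l' = 1 := by omega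
        rcases hll with rfl | rfl <;> rcases hll' with rfl | rfl
        · exact absurd rfl hl
        · -- a = (j,0) ∈ A, b = (j,1) ∉ A
          have haB : B j := (memA0' j).mp ha
          have hbU : ¬ U j := fun h => hb ((memA1' j).mpr h)
          have hsp : Sp j := (not_not.mp hbU).mp haB
          rcases hsp with h | h
          · exact Or.inl ((memS _).mpr (Or.inr (Or.inr ⟨j, h, rfl⟩)))
          · exact Or.inr ((memT _).mpr (Or.inr (Or.inr ⟨j, h, rfl⟩)))
        · have haU : U j := (memA1' j).mp ha
          have hbB : ¬ B j := fun h => hb ((memA0' j).mpr h)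
          have hsp : Sp j := by
            by_contra hs
            exact haU (iff_of_false hbB hs)
          have hsw : s(((j : Fin n), (1 : Fin 2)), (j, (0 : Fin 2))) = spokeE n j := by
            unfold spokeE
            exact Sym2.eq_swap
          rcases hsp with h | h
          · exact Or.inl ((memS _).mpr (Or.inr (Or.inr ⟨j, h, hsw⟩)))
          · exact Or.inr ((memT _).mpr (Or.inr (Or.inr ⟨j, h, hsw⟩)))
        · exact absurd rfl hl

end Final
end

section
/- Let n ≥ 3, let G = C_n □ K_2 be the prism over C_n, and let (N,F) be a near-far-labeling of G. If G admits a useful cut with respect to (N,F), then G has an (11,1)-threshold-coloring with respect to (N,F). -/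
/-- Near/far condition on two natural-number colors. -/
def okc (x y : ℕ) : Bool → Prop
  | true => x ≤ y + 1 ∧ y ≤ x + 1
  | false => y + 2 ≤ x ∨ x + 2 ≤ y

instance : ∀ x y b, Decidable (okc x y b) := fun x y b => by
  cases b <;> unfold okc <;> infer_instance

def wlist : List (ℕ × ℕ × Bool) :=
  [(0, 0, true), (0, 2, true), (0, 3, true), (1, 1, true), (1, 2, true), (1, 4, true),
   (2, 0, true), (2, 1, true), (2, 3, true), (2, 4, true), (3, 0, true), (3, 2, true),
   (3, 3, true), (4, 1, true), (4, 2, true), (4, 4, true), (0, 1, false), (0, 2, false),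
   (0, 4, false), (1, 0, false), (1, 2, false), (1, 3, false), (2, 0, false), (2, 1, false),
   (2, 3, false), (2, 4, false), (3, 1, false), (3, 2, false), (3, 4, false), (4, 0, false),
   (4, 2, false), (4, 3, false)]

def good (a b : ℕ) (l : Bool) : Prop := (a, b, l) ∈ wlist

instance : ∀ a b l, Decidable (good a b l) := fun a b l => by unfold good; infer_instance

lemma good_lt {a b : ℕ} {l : Bool} (h : good a b l) : a < 5 ∧ b < 5 := by
  have : ∀ x ∈ wlist, x.1 < 5 ∧ x.2.1 < 5 := by decide
  exact this _ h

lemma keyFin : ∀ a b : Fin 5, ∀ ls1 lu lo ls2 : Bool, good a.val b.val ls1 →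
    ∃ p : Fin 5 × Fin 5, good p.1.val p.2.val ls2 ∧ okc p.1.val a.val lu ∧
      okc p.2.val b.val lo ∧ okc p.1.val p.2.val ls1 := by decide

lemma startLem : ∀ ls0 ls1 : Bool, ∃ p : Fin 5 × Fin 5,
    good p.1.val p.2.val ls1 ∧ okc p.1.val p.2.val ls0 := by decide

lemma keyNat {a b : ℕ} (ls1 lu lo ls2 : Bool) (h : good a b ls1) :
    ∃ p : ℕ × ℕ, good p.1 p.2 ls2 ∧ okc p.1 a lu ∧ okc p.2 b lo ∧ okc p.1 p.2 ls1 := by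
  obtain ⟨ha, hb⟩ := good_lt h
  obtain ⟨p, h1, h2, h3, h4⟩ := keyFin ⟨a, ha⟩ ⟨b, hb⟩ ls1 lu lo ls2 h
  exact ⟨(p.1.val, p.2.val), h1, h2, h3, h4⟩

/-- The sequence of column color pairs, built by one-lookahead recursion. -/
noncomputable def seqC (Lu Lo Ls : ℕ → Bool) : ℕ → ℕ × ℕ
  | 0 => ((startLem (Ls 0) (Ls 1)).choose.1.val, (startLem (Ls 0) (Ls 1)).choose.2.val)
  | j + 1 =>
    let s := seqC Lu Lo Ls j
    if h : good s.1 s.2 (Ls (j + 1)) then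
      (keyNat (Ls (j + 1)) (Lu j) (Lo j) (Ls (j + 2)) h).choose
    else (0, 0)

lemma seqC_good (Lu Lo Ls : ℕ → Bool) :
    ∀ j, good (seqC Lu Lo Ls j).1 (seqC Lu Lo Ls j).2 (Ls (j + 1)) := by
  intro j
  induction j with
  | zero => exact (startLem (Ls 0) (Ls 1)).choose_spec.1
  | succ j ih =>
    rw [seqC]
    simp only [ih, dif_pos]
    exact (keyNat (Ls (j + 1)) (Lu j) (Lo j) (Ls (j + 2)) ih).choose_spec.1

lemma seqC_spoke (Lu Lo Ls : ℕ → Bool) :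
    ∀ j, okc (seqC Lu Lo Ls j).1 (seqC Lu Lo Ls j).2 (Ls j) := by
  intro j
  cases j with
  | zero => exact (startLem (Ls 0) (Ls 1)).choose_spec.2
  | succ j =>
    have ih := seqC_good Lu Lo Ls j
    rw [seqC]
    simp only [ih, dif_pos]
    exact (keyNat (Ls (j + 1)) (Lu j) (Lo j) (Ls (j + 2)) ih).choose_spec.2.2.2

lemma seqC_rail (Lu Lo Ls : ℕ → Bool) (j : ℕ) :
    okc (seqC Lu Lo Ls (j + 1)).1 (seqC Lu Lo Ls j).1 (Lu j) ∧
    okc (seqC Lu Lo Ls (j + 1)).2 (seqC Lu Lo Ls j).2 (Lo j) := by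
  have ih := seqC_good Lu Lo Ls j
  rw [seqC]
  simp only [ih, dif_pos]
  exact ⟨(keyNat (Ls (j + 1)) (Lu j) (Lo j) (Ls (j + 2)) ih).choose_spec.2.1,
    (keyNat (Ls (j + 1)) (Lu j) (Lo j) (Ls (j + 2)) ih).choose_spec.2.2.1⟩

lemma seqC_lt (Lu Lo Ls : ℕ → Bool) (j : ℕ) :
    (seqC Lu Lo Ls j).1 < 5 ∧ (seqC Lu Lo Ls j).2 < 5 :=
  good_lt (seqC_good Lu Lo Ls j)

lemma okc_near {x y : ℕ} (h : okc x y true) : |(x : ℤ) - y| ≤ 1 := by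
  rw [abs_sub_le_iff]
  obtain ⟨h1, h2⟩ := h
  omega

lemma okc_far {x y : ℕ} (h : okc x y false) : 1 < |(x : ℤ) - y| := by
  rw [lt_abs]
  obtain h | h := h
  · left; omega
  · right; omega

open Fin.NatCast in
lemma ladder_coloring (m : ℕ) (N' : Set (Sym2 (Fin (m + 1) × Fin 2))) :
    ∃ c : Fin (m + 1) × Fin 2 → ℕ, (∀ v, c v < 5) ∧
      ∀ u v : Fin (m + 1) × Fin 2, (ladderGraph m).Adj u v →
        ((s(u, v) ∈ N' → |(c u : ℤ) - c v| ≤ 1) ∧ (s(u, v) ∉ N' → 1 < |(c u : ℤ) - c v|)) := by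
  classical
  set Ls : ℕ → Bool := fun j =>
    decide (s(((j : Fin (m + 1)), (0 : Fin 2)), ((j : Fin (m + 1)), (1 : Fin 2))) ∈ N') with hLs
  set Lu : ℕ → Bool := fun j =>
    decide (s(((j : Fin (m + 1)), (0 : Fin 2)), (((j + 1 : ℕ) : Fin (m + 1)), (0 : Fin 2))) ∈ N')
    with hLu
  set Lo : ℕ → Bool := fun j =>
    decide (s(((j : Fin (m + 1)), (1 : Fin 2)), (((j + 1 : ℕ) : Fin (m + 1)), (1 : Fin 2))) ∈ N')
    with hLo
  set c : Fin (m + 1) × Fin 2 → ℕ := fun p =>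
    if p.2 = 0 then (seqC Lu Lo Ls p.1.val).1 else (seqC Lu Lo Ls p.1.val).2 with hc
  have hc0 : ∀ j : Fin (m + 1), c (j, 0) = (seqC Lu Lo Ls j.val).1 := fun j => by simp [hc]
  have hc1 : ∀ j : Fin (m + 1), c (j, 1) = (seqC Lu Lo Ls j.val).2 := fun j => by simp [hc]
  have hbound : ∀ v, c v < 5 := by
    rintro ⟨j, k⟩
    rcases (seqC_lt Lu Lo Ls j.val) with ⟨h1, h2⟩
    by_cases hk : k = 0
    · subst hk; rw [hc0]; exact h1
    · have : k = 1 := by omega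
      subst this; rw [hc1]; exact h2
  -- the conclusion predicate
  have okP : ∀ (x y : ℕ) (b : Bool) (P : Prop), okc x y b → (P ↔ b = true) →
      (P → |(x : ℤ) - y| ≤ 1) ∧ (¬P → 1 < |(x : ℤ) - y|) := by
    intro x y b P hok hiff
    cases b
    · refine ⟨fun hp => absurd (hiff.mp hp) (by simp), fun _ => okc_far hok⟩
    · exact ⟨fun _ => okc_near hok, fun hp => absurd (hiff.mpr rfl) hp⟩
  -- spoke case
  have spokeCase : ∀ j : Fin (m + 1),
      (s((j, (0 : Fin 2)), (j, (1 : Fin 2))) ∈ N' → |(c (j, 0) : ℤ) - c (j, 1)| ≤ 1) ∧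
      (s((j, (0 : Fin 2)), (j, (1 : Fin 2))) ∉ N' → 1 < |(c (j, 0) : ℤ) - c (j, 1)|) := by
    intro j
    have hj : ((j.val : ℕ) : Fin (m + 1)) = j := Fin.cast_val_eq_self j
    rw [hc0, hc1]
    refine okP _ _ (Ls j.val) _ (seqC_spoke Lu Lo Ls j.val) ?_
    rw [hLs]
    simp [hj]
  -- rail case
  have railCase : ∀ (j j' : Fin (m + 1)) (k : Fin 2), j.val + 1 = j'.val →
      (s((j, k), (j', k)) ∈ N' → |(c (j, k) : ℤ) - c (j', k)| ≤ 1) ∧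
      (s((j, k), (j', k)) ∉ N' → 1 < |(c (j, k) : ℤ) - c (j', k)|) := by
    intro j j' k hjj'
    have hj : ((j.val : ℕ) : Fin (m + 1)) = j := Fin.cast_val_eq_self j
    have hj' : ((j.val + 1 : ℕ) : Fin (m + 1)) = j' := by
      apply Fin.ext
      rw [Fin.val_cast_of_lt (by omega : j.val + 1 < m + 1)]
      exact hjj'
    have hseq : seqC Lu Lo Ls j'.val = seqC Lu Lo Ls (j.val + 1) := by rw [← hjj']
    by_cases hk : k = 0
    · subst hk
      rw [hc0, hc0, hseq, abs_sub_comm]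
      refine okP _ _ (Lu j.val) _ (seqC_rail Lu Lo Ls j.val).1 ?_
      rw [hLu]
      simp [hj, hj']
    · have : k = 1 := by omega
      subst this
      rw [hc1, hc1, hseq, abs_sub_comm]
      refine okP _ _ (Lo j.val) _ (seqC_rail Lu Lo Ls j.val).2 ?_
      rw [hLo]
      simp [hj, hj']
  refine ⟨c, hbound, ?_⟩
  have symmP : ∀ u v : Fin (m + 1) × Fin 2,
      ((s(u, v) ∈ N' → |(c u : ℤ) - c v| ≤ 1) ∧ (s(u, v) ∉ N' → 1 < |(c u : ℤ) - c v|)) →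
      ((s(v, u) ∈ N' → |(c v : ℤ) - c u| ≤ 1) ∧ (s(v, u) ∉ N' → 1 < |(c v : ℤ) - c u|)) := by
    intro u v ⟨h1, h2⟩
    rw [Sym2.eq_swap, abs_sub_comm]
    exact ⟨h1, h2⟩
  rintro ⟨j, k⟩ ⟨j', k'⟩ hadj
  rcases SimpleGraph.boxProd_adj.mp hadj with ⟨hpath, heq2⟩ | ⟨htop, heq1⟩
  · simp only at heq2
    subst heq2
    rcases (SimpleGraph.pathGraph_adj.mp hpath) with h1 | h1
    · exact railCase j j' k h1
    · exact symmP _ _ (railCase j' j k h1)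
  · simp only at heq1 htop
    subst heq1
    have hne : k ≠ k' := (SimpleGraph.top_adj _ _).mp htop
    fin_cases k <;> fin_cases k'
    · exact absurd rfl hne
    · exact spokeCase j
    · exact symmP _ _ (spokeCase j)
    · exact absurd rfl hne

/-- If a prism with a near-far-labeling admits a useful cut, then it has an
`(11,1)`-threshold-coloring with respect to that labeling. -/
theorem prism_usefulCut_threshold_coloring (n : ℕ) (hn : 3 ≤ n)
    (N : Set (Sym2 (Fin n × Fin 2))) (hN : N ⊆ (prismGraph n).edgeSet)
    (h : ∃ S, IsUsefulCut n N S) :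
    ∃ c : Fin n × Fin 2 → ℕ, IsThresholdColoring (prismGraph n) N 11 1 c := by
  classical
  obtain ⟨S, hSsub, A, ⟨m₁, f₁, hf₁⟩, ⟨m₂, f₂, hf₂⟩, hS⟩ := h
  set N₁ : Set (Sym2 (Fin (m₁ + 1) × Fin 2)) :=
    {e | ∃ x y : ↥A, s(x.val, y.val) ∈ N ∧ e = s(f₁ x, f₁ y)} with hN₁
  set N₂ : Set (Sym2 (Fin (m₂ + 1) × Fin 2)) :=
    {e | ∃ x y : ↥Aᶜ, s(x.val, y.val) ∈ N ∧ e = s(f₂ x, f₂ y)} with hN₂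
  obtain ⟨c₁, hb₁, hp₁⟩ := ladder_coloring m₁ N₁
  obtain ⟨c₂, hb₂, hp₂⟩ := ladder_coloring m₂ N₂
  set c : Fin n × Fin 2 → ℕ := fun p =>
    if hp : p ∈ A then c₁ (f₁ ⟨p, hp⟩) else c₂ (f₂ ⟨p, hp⟩) + 6 with hc
  have hbound : ∀ v, c v < 11 := by
    intro v
    rw [hc]
    by_cases hv : v ∈ A
    · simp only [hv, dif_pos]
      have := hb₁ (f₁ ⟨v, hv⟩)
      omega
    · simp only [hv, dif_neg, not_false_iff]
      have := hb₂ (f₂ ⟨v, hv⟩)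
      omega
  have main : ∀ u v, (prismGraph n).Adj u v →
      ((s(u, v) ∈ N → |(c u : ℤ) - c v| ≤ 1) ∧ (s(u, v) ∉ N → 1 < |(c u : ℤ) - c v|)) := by
    have cross : ∀ u v, (prismGraph n).Adj u v → u ∈ A → v ∉ A →
        ((s(u, v) ∈ N → |(c u : ℤ) - c v| ≤ 1) ∧ (s(u, v) ∉ N → 1 < |(c u : ℤ) - c v|)) := by
      intro u v hadj hu hv
      have hmemS : s(u, v) ∈ S := by
        rw [hS]; exact ⟨u, v, hu, hv, hadj, rfl⟩
      have hnotN : s(u, v) ∉ N := (hSsub hmemS).2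
      constructor
      · intro hmem; exact absurd hmem hnotN
      · intro _
        have h1 : c u < 5 := by
          rw [hc]; simp only [hu, dif_pos]; exact hb₁ (f₁ ⟨u, hu⟩)
        have h2 : 6 ≤ c v := by
          rw [hc]; simp only [hv, dif_neg, not_false_iff]; omega
        rw [lt_abs]
        right
        have : (c u : ℤ) < 5 := by exact_mod_cast h1
        have : (6 : ℤ) ≤ c v := by exact_mod_cast h2
        omega
    intro u v hadj
    by_cases hu : u ∈ A <;> by_cases hv : v ∈ A
    · -- both in A
      have hadj' : ((prismGraph n).induce A).Adj ⟨u, hu⟩ ⟨v, hv⟩ := by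
        simp only [SimpleGraph.comap_adj, Function.Embedding.coe_subtype]
        exact hadj
      have hladj := f₁.map_adj hadj'
      have hcu : c u = c₁ (f₁ ⟨u, hu⟩) := by rw [hc]; simp only [hu, dif_pos]
      have hcv : c v = c₁ (f₁ ⟨v, hv⟩) := by rw [hc]; simp only [hv, dif_pos]
      rw [hcu, hcv]
      obtain ⟨hnear, hfar⟩ := hp₁ _ _ hladj
      constructor
      · intro hmem
        exact hnear ⟨⟨u, hu⟩, ⟨v, hv⟩, hmem, rfl⟩
      · intro hmem
        refine hfar ?_
        rintro ⟨x, y, hxy, heq⟩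
        rw [Sym2.eq_iff] at heq
        rcases heq with ⟨e1, e2⟩ | ⟨e1, e2⟩
        · rw [← hf₁ e1, ← hf₁ e2] at hxy
          exact hmem hxy
        · rw [← hf₁ e2, ← hf₁ e1] at hxy
          rw [Sym2.eq_swap] at hxy
          exact hmem hxy
    · exact cross u v hadj hu hv
    · have h' := cross v u hadj.symm hv hu
      rw [Sym2.eq_swap, abs_sub_comm] at h'
      exact h'
    · -- both outside A
      have hadj' : ((prismGraph n).induce Aᶜ).Adj ⟨u, hu⟩ ⟨v, hv⟩ := by
        simp only [SimpleGraph.comap_adj, Function.Embedding.coe_subtype]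
        exact hadj
      have hladj := f₂.map_adj hadj'
      have hcu : c u = c₂ (f₂ ⟨u, hu⟩) + 6 := by rw [hc]; simp only [hu, dif_neg, not_false_iff]
      have hcv : c v = c₂ (f₂ ⟨v, hv⟩) + 6 := by rw [hc]; simp only [hv, dif_neg, not_false_iff]
      have hdiff : (c u : ℤ) - c v = (c₂ (f₂ ⟨u, hu⟩) : ℤ) - c₂ (f₂ ⟨v, hv⟩) := by
        rw [hcu, hcv]; push_cast; ring
      rw [hdiff]
      obtain ⟨hnear, hfar⟩ := hp₂ _ _ hladj
      constructor
      · intro hmem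
        exact hnear ⟨⟨u, hu⟩, ⟨v, hv⟩, hmem, rfl⟩
      · intro hmem
        refine hfar ?_
        rintro ⟨x, y, hxy, heq⟩
        rw [Sym2.eq_iff] at heq
        rcases heq with ⟨e1, e2⟩ | ⟨e1, e2⟩
        · rw [← hf₂ e1, ← hf₂ e2] at hxy
          exact hmem hxy
        · rw [← hf₂ e2, ← hf₂ e1] at hxy
          rw [Sym2.eq_swap] at hxy
          exact hmem hxy
  exact ⟨c, hbound, fun u v hadj hmem => (main u v hadj).1 hmem,
    fun u v hadj hmem => by exact_mod_cast (main u v hadj).2 hmem⟩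
end

section
/- Let n ≥ 4, let G = C_n □ K_2 be the prism over C_n, and let (N,F) be a near-far-labeling of G such that: (i) G contains no two disjoint half-cuts; (ii) every vertex of G is incident with at least one near edge; and (iii) G has no balanced parallel square whose two spokes are both far. Then G contains an unbalanced square. -/
open scoped Classical in
/-- The number of near edges of the square `σ_i` of the prism (its edges being
`e̲_i, ē_i, e'_i, e'_{i+1}`) with respect to the near-far-labeling `(N, E \ N)`. -/
noncomputable def nearCount (n : ℕ) [NeZero n] (N : Set (Sym2 (Fin n × Fin 2)))
    (i : Fin n) : ℕ :=
  (if underE n i ∈ N then 1 else 0) + (if overE n i ∈ N then 1 else 0) +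
    (if spokeE n i ∈ N then 1 else 0) + (if spokeE n (i + 1) ∈ N then 1 else 0)

/-- The square `σ_i` is balanced (exactly two near and two far edges), parallel (its two
near edges form a matching), and its two spokes are far; equivalently, its peripheral
edges are near and its spokes are far. -/
def IsBalancedParallelFarSpokes (n : ℕ) [NeZero n] (N : Set (Sym2 (Fin n × Fin 2)))
    (i : Fin n) : Prop :=
  underE n i ∈ N ∧ overE n i ∈ N ∧ spokeE n i ∉ N ∧ spokeE n (i + 1) ∉ N

set_option linter.unusedSectionVars false
set_option linter.unusedVariables false
set_option maxHeartbeats 1000000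

section Helpers
variable {n : ℕ} [NeZero n]
open Fin.NatCast Fin.CommRing

lemma val_one (hn : 4 ≤ n) : (1 : Fin n).val = 1 := by
  rw [← Nat.cast_one (R := Fin n), Fin.val_natCast]
  exact Nat.mod_eq_of_lt (by omega)

lemma fin_shift_ne (hn : 4 ≤ n) (i : Fin n) (k : ℕ) (hk : 0 < k) (hkn : k < n) :
    i + (k : Fin n) ≠ i := by
  intro h
  have h1 := congrArg Fin.val h
  rw [Fin.add_def, Fin.val_natCast, Nat.mod_eq_of_lt hkn] at h1
  have h2 : (i.val + k) % n = i.val := h1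
  have hi := i.isLt
  rcases Nat.lt_or_ge (i.val + k) n with hlt | hge
  · rw [Nat.mod_eq_of_lt hlt] at h2; omega
  · rw [Nat.mod_eq_sub_mod hge, Nat.mod_eq_of_lt (by omega)] at h2; omega

lemma underE_inj (hn : 4 ≤ n) {i j : Fin n} (h : underE n i = underE n j) : i = j := by
  rw [underE, underE, Sym2.eq_iff] at h
  rcases h with ⟨h1, h2⟩ | ⟨h1, h2⟩
  · exact congrArg Prod.fst h1
  · have e1 : i = j + 1 := congrArg Prod.fst h1
    have e2 : i + 1 = j := congrArg Prod.fst h2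
    have e3 : i + ((2 : ℕ) : Fin n) = i := by
      have : ((2 : ℕ) : Fin n) = 1 + 1 := by push_cast; ring
      rw [this, ← add_assoc, e2, ← e1]
    exact absurd e3 (fin_shift_ne hn i 2 (by omega) (by omega))

lemma overE_inj (hn : 4 ≤ n) {i j : Fin n} (h : overE n i = overE n j) : i = j := by
  rw [overE, overE, Sym2.eq_iff] at h
  rcases h with ⟨h1, h2⟩ | ⟨h1, h2⟩
  · exact congrArg Prod.fst h1
  · have e1 : i = j + 1 := congrArg Prod.fst h1
    have e2 : i + 1 = j := congrArg Prod.fst h2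
    have e3 : i + ((2 : ℕ) : Fin n) = i := by
      have : ((2 : ℕ) : Fin n) = 1 + 1 := by push_cast; ring
      rw [this, ← add_assoc, e2, ← e1]
    exact absurd e3 (fin_shift_ne hn i 2 (by omega) (by omega))

lemma spokeE_inj {i j : Fin n} (h : spokeE n i = spokeE n j) : i = j := by
  rw [spokeE, spokeE, Sym2.eq_iff] at h
  rcases h with ⟨h1, _⟩ | ⟨h1, _⟩
  · exact congrArg Prod.fst h1
  · have := congrArg Prod.snd h1; simp at this

lemma underE_ne_overE (i j : Fin n) : underE n i ≠ overE n j := by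
  intro h
  rw [underE, overE, Sym2.eq_iff] at h
  rcases h with ⟨h1, _⟩ | ⟨h1, _⟩ <;>
    · have := congrArg Prod.snd h1; simp at this

lemma underE_ne_spokeE (i j : Fin n) : underE n i ≠ spokeE n j := by
  intro h
  rw [underE, spokeE, Sym2.eq_iff] at h
  rcases h with ⟨_, h2⟩ | ⟨h1, _⟩
  · have := congrArg Prod.snd h2; simp at this
  · have := congrArg Prod.snd h1; simp at this

lemma overE_ne_spokeE (i j : Fin n) : overE n i ≠ spokeE n j := by
  intro h
  rw [overE, spokeE, Sym2.eq_iff] at h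
  rcases h with ⟨h1, _⟩ | ⟨_, h2⟩
  · have := congrArg Prod.snd h1; simp at this
  · have := congrArg Prod.snd h2; simp at this

lemma underE_mem (hn : 4 ≤ n) (i : Fin n) : underE n i ∈ (prismGraph n).edgeSet := by
  rw [underE, SimpleGraph.mem_edgeSet, prismGraph, SimpleGraph.boxProd_adj]
  left
  refine ⟨?_, rfl⟩
  rw [SimpleGraph.cycleGraph_adj']
  right
  rw [add_sub_cancel_left, val_one hn]

lemma overE_mem (hn : 4 ≤ n) (i : Fin n) : overE n i ∈ (prismGraph n).edgeSet := by
  rw [overE, SimpleGraph.mem_edgeSet, prismGraph, SimpleGraph.boxProd_adj]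
  left
  refine ⟨?_, rfl⟩
  rw [SimpleGraph.cycleGraph_adj']
  right
  rw [add_sub_cancel_left, val_one hn]

lemma spokeE_mem (i : Fin n) : spokeE n i ∈ (prismGraph n).edgeSet := by
  rw [spokeE, SimpleGraph.mem_edgeSet, prismGraph, SimpleGraph.boxProd_adj]
  right
  refine ⟨?_, rfl⟩
  simp

end Helpers

section Part2
variable {n : ℕ} [NeZero n]
open Fin.NatCast Fin.CommRing

lemma vertexNear0 (hn : 4 ≤ n) (N : Set (Sym2 (Fin n × Fin 2)))
    (h2 : ∀ v : Fin n × Fin 2, ∃ w, (prismGraph n).Adj v w ∧ s(v, w) ∈ N) (i : Fin n) :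
    underE n (i - 1) ∈ N ∨ underE n i ∈ N ∨ spokeE n i ∈ N := by
  obtain ⟨⟨w1, w2⟩, hadj, hmem⟩ := h2 (i, 0)
  rw [prismGraph, SimpleGraph.boxProd_adj] at hadj
  rcases hadj with ⟨hc, he⟩ | ⟨hk, he⟩
  · have hw2 : w2 = 0 := by simpa using he.symm
    subst hw2
    rw [SimpleGraph.cycleGraph_adj'] at hc
    rcases hc with h | h
    · have hs : i - w1 = 1 := Fin.ext (by rw [val_one hn]; exact h)
      have hw1 : w1 = i - 1 := by linear_combination -hs
      subst hw1
      left
      rw [underE, sub_add_cancel]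
      rwa [Sym2.eq_swap] at hmem
    · have hs : w1 - i = 1 := Fin.ext (by rw [val_one hn]; exact h)
      have hw1 : w1 = i + 1 := by linear_combination hs
      subst hw1
      right; left
      exact hmem
  · have hi : i = w1 := he
    have hw2 : w2 = 1 := by
      have h0 : (0 : Fin 2) ≠ w2 := hk
      omega
    subst hi; subst hw2
    right; right
    exact hmem

lemma vertexNear1 (hn : 4 ≤ n) (N : Set (Sym2 (Fin n × Fin 2)))
    (h2 : ∀ v : Fin n × Fin 2, ∃ w, (prismGraph n).Adj v w ∧ s(v, w) ∈ N) (i : Fin n) :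
    overE n (i - 1) ∈ N ∨ overE n i ∈ N ∨ spokeE n i ∈ N := by
  obtain ⟨⟨w1, w2⟩, hadj, hmem⟩ := h2 (i, 1)
  rw [prismGraph, SimpleGraph.boxProd_adj] at hadj
  rcases hadj with ⟨hc, he⟩ | ⟨hk, he⟩
  · have hw2 : w2 = 1 := by simpa using he.symm
    subst hw2
    rw [SimpleGraph.cycleGraph_adj'] at hc
    rcases hc with h | h
    · have hs : i - w1 = 1 := Fin.ext (by rw [val_one hn]; exact h)
      have hw1 : w1 = i - 1 := by linear_combination -hs
      subst hw1
      left
      rw [overE, sub_add_cancel]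
      rwa [Sym2.eq_swap] at hmem
    · have hs : w1 - i = 1 := Fin.ext (by rw [val_one hn]; exact h)
      have hw1 : w1 = i + 1 := by linear_combination hs
      subst hw1
      right; left
      exact hmem
  · have hi : i = w1 := he
    have hw2 : w2 = 0 := by
      have h0 : (1 : Fin 2) ≠ w2 := hk
      omega
    subst hi; subst hw2
    right; right
    rw [spokeE]
    rwa [Sym2.eq_swap] at hmem

end Part2

section Part3
variable {n : ℕ} [NeZero n]
open Fin.NatCast Fin.CommRing

lemma spokeRange_zero (i : Fin n) : spokeRange n i 0 = ∅ := by
  ext e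
  simp only [spokeRange, Set.mem_setOf_eq, Set.mem_empty_iff_false, iff_false]
  rintro ⟨j, hj1, hj2, _⟩
  omega

lemma spokeRange_one (i : Fin n) : spokeRange n i 1 = {spokeE n (i + 1)} := by
  ext e
  simp only [spokeRange, Set.mem_setOf_eq, Set.mem_singleton_iff]
  constructor
  · rintro ⟨j, hj1, hj2, rfl⟩
    have hj : j = 1 := by omega
    subst hj
    rw [Nat.cast_one]
  · rintro rfl
    exact ⟨1, le_refl _, le_refl _, by rw [Nat.cast_one]⟩

lemma hc0 (hn : 4 ≤ n) (N : Set (Sym2 (Fin n × Fin 2))) (i : Fin n)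
    (h1 : underE n i ∉ N) (h2 : overE n i ∉ N) :
    IsHalfCut n N {underE n i, overE n i} := by
  constructor
  · intro e he
    rcases he with rfl | rfl
    · exact ⟨underE_mem hn i, h1⟩
    · exact ⟨overE_mem hn i, h2⟩
  · refine ⟨i, 0, by omega, Or.inl ?_⟩
    rw [spokeRange_zero, Nat.cast_zero, add_zero]
    ext x; simp

lemma hc1 (hn : 4 ≤ n) (N : Set (Sym2 (Fin n × Fin 2))) (i : Fin n)
    (h1 : underE n i ∉ N) (h2 : overE n (i + 1) ∉ N) (h3 : spokeE n (i + 1) ∉ N) :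
    IsHalfCut n N {underE n i, overE n (i + 1), spokeE n (i + 1)} := by
  constructor
  · intro e he
    rcases he with rfl | rfl | rfl
    · exact ⟨underE_mem hn i, h1⟩
    · exact ⟨overE_mem hn _, h2⟩
    · exact ⟨spokeE_mem _, h3⟩
  · refine ⟨i, 1, by omega, Or.inl ?_⟩
    rw [spokeRange_one, Nat.cast_one]

lemma hc1' (hn : 4 ≤ n) (N : Set (Sym2 (Fin n × Fin 2))) (i : Fin n)
    (h1 : overE n i ∉ N) (h2 : underE n (i + 1) ∉ N) (h3 : spokeE n (i + 1) ∉ N) :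
    IsHalfCut n N {overE n i, underE n (i + 1), spokeE n (i + 1)} := by
  constructor
  · intro e he
    rcases he with rfl | rfl | rfl
    · exact ⟨overE_mem hn i, h1⟩
    · exact ⟨underE_mem hn _, h2⟩
    · exact ⟨spokeE_mem _, h3⟩
  · refine ⟨i, 1, by omega, Or.inr ?_⟩
    rw [spokeRange_one, Nat.cast_one]

lemma shift1 (hn : 4 ≤ n) (a : Fin n) : a ≠ a + 1 := by
  intro h
  apply fin_shift_ne hn a 1 (by omega) (by omega)
  push_cast
  linear_combination -h

lemma shift2 (hn : 4 ≤ n) (a : Fin n) : a ≠ a + 1 + 1 := by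
  intro h
  apply fin_shift_ne hn a 2 (by omega) (by omega)
  push_cast
  linear_combination -h

lemma shift3 (hn : 4 ≤ n) (a : Fin n) : a ≠ a + 1 + 1 + 1 := by
  intro h
  apply fin_shift_ne hn a 3 (by omega) (by omega)
  push_cast
  linear_combination -h

lemma cluster_disjoint (hn : 4 ≤ n) (j : Fin n) :
    Disjoint
      ({underE n j, overE n j, underE n (j + 1), overE n (j + 1), spokeE n (j + 1)} :
        Set (Sym2 (Fin n × Fin 2)))
      ({underE n (j + 1 + 1), overE n (j + 1 + 1), underE n (j + 1 + 1 + 1),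
        overE n (j + 1 + 1 + 1), spokeE n (j + 1 + 1 + 1)} : Set (Sym2 (Fin n × Fin 2))) := by
  rw [Set.disjoint_left]
  intro e he1 he2
  simp only [Set.mem_insert_iff, Set.mem_singleton_iff] at he1 he2
  rcases he1 with rfl | rfl | rfl | rfl | rfl <;>
    rcases he2 with h | h | h | h | h <;>
    first
      | exact underE_ne_overE _ _ h
      | exact underE_ne_overE _ _ h.symm
      | exact underE_ne_spokeE _ _ h
      | exact underE_ne_spokeE _ _ h.symm
      | exact overE_ne_spokeE _ _ h
      | exact overE_ne_spokeE _ _ h.symm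
      | (first
          | have hij := underE_inj hn h
          | have hij := overE_inj hn h
          | have hij := spokeE_inj h) <;>
        first
          | exact shift1 hn _ hij
          | exact shift2 hn _ hij
          | exact shift3 hn _ hij

end Part3

section Part4
variable {n : ℕ} [NeZero n]
open Fin.NatCast Fin.CommRing

lemma sameLemma (N : Set (Sym2 (Fin n × Fin 2)))
    (hcon : ∀ i, nearCount n N i = 2)
    (h3 : ∀ i : Fin n, ¬ IsBalancedParallelFarSpokes n N i) (i : Fin n)
    (hiff : spokeE n i ∈ N ↔ spokeE n (i + 1) ∈ N) :
    spokeE n i ∈ N ∧ underE n i ∉ N ∧ overE n i ∉ N := by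
  have h := hcon i
  rw [nearCount] at h
  by_cases hs : spokeE n i ∈ N
  · have hs' := hiff.1 hs
    rw [if_pos hs, if_pos hs'] at h
    split_ifs at h <;> first | omega | tauto
  · have hs' : spokeE n (i + 1) ∉ N := fun hh => hs (hiff.2 hh)
    rw [if_neg hs, if_neg hs'] at h
    have h3' := h3 i
    rw [IsBalancedParallelFarSpokes] at h3'
    split_ifs at h <;> first | omega | tauto

lemma changeLemma (hn : 4 ≤ n) (N : Set (Sym2 (Fin n × Fin 2)))
    (hcon : ∀ i, nearCount n N i = 2)
    (h2 : ∀ v : Fin n × Fin 2, ∃ w, (prismGraph n).Adj v w ∧ s(v, w) ∈ N) (j : Fin n)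
    (hj : spokeE n j ∈ N) (hj1 : spokeE n (j + 1) ∉ N) (hj2 : spokeE n (j + 1 + 1) ∈ N) :
    (underE n j ∈ N ∧ overE n j ∉ N ∧ underE n (j + 1) ∉ N ∧ overE n (j + 1) ∈ N) ∨
    (underE n j ∉ N ∧ overE n j ∈ N ∧ underE n (j + 1) ∈ N ∧ overE n (j + 1) ∉ N) := by
  have hA := hcon j
  have hB := hcon (j + 1)
  rw [nearCount, if_pos hj, if_neg hj1] at hA
  rw [nearCount, if_neg hj1, if_pos hj2] at hB
  have v0 := vertexNear0 hn N h2 (j + 1)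
  have v1 := vertexNear1 hn N h2 (j + 1)
  rw [add_sub_cancel_right] at v0 v1
  split_ifs at hA hB <;> first | omega | tauto

lemma pair_disjoint (hn : 4 ≤ n) {i j : Fin n} (hij : i ≠ j) :
    Disjoint ({underE n i, overE n i} : Set (Sym2 (Fin n × Fin 2)))
      ({underE n j, overE n j} : Set (Sym2 (Fin n × Fin 2))) := by
  rw [Set.disjoint_left]
  intro e he1 he2
  simp only [Set.mem_insert_iff, Set.mem_singleton_iff] at he1 he2
  rcases he1 with rfl | rfl <;> rcases he2 with h | h
  · exact hij (underE_inj hn h)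
  · exact underE_ne_overE _ _ h
  · exact underE_ne_overE _ _ h.symm
  · exact hij (overE_inj hn h)

end Part4


/-- Subclaim: if `n ≥ 4` and the labeled prism has (i) no two disjoint half-cuts,
(ii) every vertex incident with a near edge, and (iii) no balanced parallel square with
far spokes, then some square is unbalanced (its edges do not split two near, two far). -/
theorem prism_exists_unbalanced_square (n : ℕ) [NeZero n] (hn : 4 ≤ n)
    (N : Set (Sym2 (Fin n × Fin 2))) (hN : N ⊆ (prismGraph n).edgeSet)
    (h1 : ¬ ∃ S T, IsHalfCut n N S ∧ IsHalfCut n N T ∧ Disjoint S T)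
    (h2 : ∀ v : Fin n × Fin 2, ∃ w, (prismGraph n).Adj v w ∧ s(v, w) ∈ N)
    (h3 : ∀ i : Fin n, ¬ IsBalancedParallelFarSpokes n N i) :
    ∃ i : Fin n, nearCount n N i ≠ 2 := by
  by_contra hcc
  push_neg at hcc
  by_cases hQ : ∃ i j : Fin n, i ≠ j ∧ (spokeE n i ∈ N ↔ spokeE n (i + 1) ∈ N) ∧
      (spokeE n j ∈ N ↔ spokeE n (j + 1) ∈ N)
  · obtain ⟨i, j, hij, hi, hj⟩ := hQ
    obtain ⟨_, hiu, hio⟩ := sameLemma N hcc h3 i hi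
    obtain ⟨_, hju, hjo⟩ := sameLemma N hcc h3 j hj
    exact h1 ⟨_, _, hc0 hn N i hiu hio, hc0 hn N j hju hjo, pair_disjoint hn hij⟩
  · push_neg at hQ
    by_cases hex : ∃ i0 : Fin n, (spokeE n i0 ∈ N ↔ spokeE n (i0 + 1) ∈ N)
    case pos =>
      obtain ⟨i0, hA0⟩ := hex
      obtain ⟨hs0, hu0, ho0⟩ := sameLemma N hcc h3 i0 hA0
      have hs1 : spokeE n (i0 + 1) ∈ N := hA0.1 hs0
      have hd1 := hQ i0 (i0 + 1) (shift1 hn i0) hA0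
      have hns2 : spokeE n (i0 + 1 + 1) ∉ N := by tauto
      have hd2 := hQ i0 (i0 + 1 + 1) (shift2 hn i0) hA0
      have hs3 : spokeE n (i0 + 1 + 1 + 1) ∈ N := by tauto
      have e0 : i0 - 1 + 1 = i0 := sub_add_cancel _ _
      have hcd := cluster_disjoint hn (i0 - 1)
      rw [e0] at hcd
      rcases changeLemma hn N hcc h2 (i0 + 1) hs1 hns2 hs3 with ⟨hu, ho, hu', ho'⟩ | ⟨hu, ho, hu', ho'⟩
      · refine h1 ⟨_, _, hc0 hn N i0 hu0 ho0, hc1' hn N (i0 + 1) ho hu' hns2, ?_⟩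
        refine Set.disjoint_of_subset ?_ ?_ hcd <;>
          · intro x hx
            simp only [Set.mem_insert_iff, Set.mem_singleton_iff] at hx ⊢
            tauto
      · refine h1 ⟨_, _, hc0 hn N i0 hu0 ho0, hc1 hn N (i0 + 1) hu ho' hns2, ?_⟩
        refine Set.disjoint_of_subset ?_ ?_ hcd <;>
          · intro x hx
            simp only [Set.mem_insert_iff, Set.mem_singleton_iff] at hx ⊢
            tauto
    case neg =>
      push_neg at hex
      have hfar : ∃ i : Fin n, spokeE n i ∉ N := by
        by_cases hp : spokeE n (0 : Fin n) ∈ N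
        · refine ⟨0 + 1, ?_⟩
          have := hex 0
          tauto
        · exact ⟨0, hp⟩
      obtain ⟨i, hpi⟩ := hfar
      have hp1 : spokeE n (i + 1) ∈ N := by have := hex i; tauto
      have hp2 : spokeE n (i + 1 + 1) ∉ N := by have := hex (i + 1); tauto
      have hp3 : spokeE n (i + 1 + 1 + 1) ∈ N := by have := hex (i + 1 + 1); tauto
      have e0 : i - 1 + 1 = i := sub_add_cancel _ _
      have hpm : spokeE n (i - 1) ∈ N := by have := hex (i - 1); rw [e0] at this; tauto
      have hcd := cluster_disjoint hn (i - 1)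
      rw [e0] at hcd
      have hpm1 : spokeE n (i - 1 + 1) ∉ N := by rw [e0]; exact hpi
      have hpm2 : spokeE n (i - 1 + 1 + 1) ∈ N := by rw [e0]; exact hp1
      have C1 := changeLemma hn N hcc h2 (i - 1) hpm hpm1 hpm2
      have C2 := changeLemma hn N hcc h2 (i + 1) hp1 hp2 hp3
      have key : ∃ S T, IsHalfCut n N S ∧ IsHalfCut n N T ∧ Disjoint S T := by
        rcases C1 with ⟨hu, ho, hu', ho'⟩ | ⟨hu, ho, hu', ho'⟩ <;>
          rcases C2 with ⟨ku, ko, ku', ko'⟩ | ⟨ku, ko, ku', ko'⟩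
        · have s1 := hc1' hn N (i - 1) ho hu' hpm1
          rw [e0] at s1
          have s2 := hc1' hn N (i + 1) ko ku' hp2
          refine ⟨_, _, s1, s2, Set.disjoint_of_subset ?_ ?_ hcd⟩ <;>
            · intro x hx
              simp only [Set.mem_insert_iff, Set.mem_singleton_iff] at hx ⊢
              tauto
        · have s1 := hc1' hn N (i - 1) ho hu' hpm1
          rw [e0] at s1
          have s2 := hc1 hn N (i + 1) ku ko' hp2
          refine ⟨_, _, s1, s2, Set.disjoint_of_subset ?_ ?_ hcd⟩ <;>
            · intro x hx
              simp only [Set.mem_insert_iff, Set.mem_singleton_iff] at hx ⊢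
              tauto
        · have s1 := hc1 hn N (i - 1) hu ho' hpm1
          rw [e0] at s1
          have s2 := hc1' hn N (i + 1) ko ku' hp2
          refine ⟨_, _, s1, s2, Set.disjoint_of_subset ?_ ?_ hcd⟩ <;>
            · intro x hx
              simp only [Set.mem_insert_iff, Set.mem_singleton_iff] at hx ⊢
              tauto
        · have s1 := hc1 hn N (i - 1) hu ho' hpm1
          rw [e0] at s1
          have s2 := hc1 hn N (i + 1) ku ko' hp2
          refine ⟨_, _, s1, s2, Set.disjoint_of_subset ?_ ?_ hcd⟩ <;>
            · intro x hx
              simp only [Set.mem_insert_iff, Set.mem_singleton_iff] at hx ⊢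
              tauto
      exact h1 key
end
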